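/- Fix n ≥ 2 and distinct indices i, j ∈ {1,…,n}. Let G = Zⁿ ⋊_φ (Z/2Z) be the semidirect product where the nontrivial element of Z/2Z acts on Zⁿ by swapping the standard generators x_i and x_j and fixing x_k for all k ∉ {i,j}. Then for every finite symmetric generating set A of G, there exist a, b ∈ A such that the three-letter word a·b·a⁻¹ is geodesic; consequently the geodesic language Geo(G,A) is not piecewise excluding. -/

import Mathlib

/-- `w` is a word over the alphabet `A`: every letter of `w` lies in `A`. -/
def IsWordOver {G : Type*} (A : Finset G) (w : List G) : Prop :=
  ∀ x ∈ w, x ∈ A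

/-- `A` is a finite symmetric (inverse-closed) generating set of the group `G`. -/
def IsSymmGen {G : Type*} [Group G] (A : Finset G) : Prop :=
  Subgroup.closure (A : Set G) = ⊤ ∧ ∀ a ∈ A, a⁻¹ ∈ A

/-- `w` is a geodesic word over `A`: no word over `A` of strictly smaller length
evaluates to the same element of `G`. -/
def IsGeodesic {G : Type*} [Group G] (A : Finset G) (w : List G) : Prop :=
  IsWordOver A w ∧
    ∀ v : List G, IsWordOver A v → v.prod = w.prod → w.length ≤ v.length

/-- The geodesic language of `G` over `A`. -/
def Geo {G : Type*} [Group G] (A : Finset G) : Set (List G) :=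
  {w | IsGeodesic A w}

/-- A language `L` of words over `A` is piecewise excluding if there is a finite set `F`
of words over `A` such that a word `w` over `A` lies in `L` iff no element of `F` is a
piecewise subword (i.e. a not-necessarily-contiguous subsequence) of `w`. -/
def PiecewiseExcluding {G : Type*} (A : Finset G) (L : Set (List G)) : Prop :=
  ∃ F : Finset (List G), (∀ u ∈ F, IsWordOver A u) ∧
    ∀ w : List G, IsWordOver A w → (w ∈ L ↔ ∀ u ∈ F, ¬ List.Sublist u w)

/-- A monoid homomorphism `ℤ/2ℤ →* MulAut N` determined by an involutive automorphism. -/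
def phiOfInvolution {N : Type*} [Group N] (σ : MulAut N) (hσ : σ * σ = 1) :
    Multiplicative (ZMod 2) →* MulAut N where
  toFun z := σ ^ (Multiplicative.toAdd z).val
  map_one' := by
    show σ ^ (0 : ZMod 2).val = 1
    simp
  map_mul' x y := by
    have h2 : σ ^ 2 = 1 := by rw [pow_two]; exact hσ
    have key : ∀ m : ℕ, σ ^ m = σ ^ (m % 2) := by
      intro m
      conv_lhs => rw [← Nat.div_add_mod m 2]
      rw [pow_add, pow_mul, h2, one_pow, one_mul]
    show σ ^ ((Multiplicative.toAdd x) + (Multiplicative.toAdd y)).val = _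
    rw [ZMod.val_add, ← key, pow_add]

/-- The automorphism of `ℤⁿ` swapping the `i`-th and `j`-th coordinates (interchanging
the `i`-th and `j`-th standard generators and fixing the others). -/
def swapAddAut (n : ℕ) (i j : Fin n) : (Fin n → ℤ) ≃+ (Fin n → ℤ) where
  toFun v := v ∘ Equiv.swap i j
  invFun v := v ∘ Equiv.swap i j
  left_inv v := by funext k; simp
  right_inv v := by funext k; simp
  map_add' v w := rfl

/-- The action of `ℤ/2ℤ` on `ℤⁿ` whose nontrivial element swaps the `i`-th and `j`-th
standard generators and fixes the others. -/
def phiSwap (n : ℕ) (i j : Fin n) :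
    Multiplicative (ZMod 2) →* MulAut (Multiplicative (Fin n → ℤ)) :=
  phiOfInvolution (AddEquiv.toMultiplicative (swapAddAut n i j))
    (by
      refine MulEquiv.ext fun v => ?_
      show Multiplicative.ofAdd
          (swapAddAut n i j (swapAddAut n i j (Multiplicative.toAdd v))) = v
      have h : ∀ w : Fin n → ℤ, swapAddAut n i j (swapAddAut n i j w) = w := by
        intro w; funext k; simp [swapAddAut]
      rw [h]; rfl)


namespace PWEaux
variable {n : ℕ} (i j : Fin n)

abbrev Gsd (n : ℕ) (i j : Fin n) :=
  (Multiplicative (Fin n → ℤ)) ⋊[phiSwap n i j] Multiplicative (ZMod 2)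

def dG (g : Gsd n i j) : ℤ :=
  Multiplicative.toAdd g.left i - Multiplicative.toAdd g.left j

def pG (g : Gsd n i j) : ZMod 2 := Multiplicative.toAdd g.right

lemma zmod2cases : ∀ e : ZMod 2, e = 0 ∨ e = 1 := by decide

lemma d_phi (z : Multiplicative (ZMod 2)) (v : Multiplicative (Fin n → ℤ)) :
    Multiplicative.toAdd ((phiSwap n i j z) v) i - Multiplicative.toAdd ((phiSwap n i j z) v) j
      = (if Multiplicative.toAdd z = 0 then 1 else -1) *
        (Multiplicative.toAdd v i - Multiplicative.toAdd v j) := by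
  rcases zmod2cases (Multiplicative.toAdd z) with h | h
  · have hz : z = 1 := by
      have : Multiplicative.ofAdd (Multiplicative.toAdd z) = Multiplicative.ofAdd 0 :=
        congrArg _ h
      simpa using this
    rw [hz, map_one]
    simp [h]
  · have h0 : (Multiplicative.toAdd z) ≠ 0 := by rw [h]; decide
    have hval : (Multiplicative.toAdd z).val = 1 := by rw [h]; decide
    have happ : (phiSwap n i j z) v =
        (AddEquiv.toMultiplicative (swapAddAut n i j)) v := by
      show ((AddEquiv.toMultiplicative (swapAddAut n i j)) ^ (Multiplicative.toAdd z).val) v = _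
      rw [hval, pow_one]
    rw [happ, if_neg h0]
    show (Multiplicative.toAdd v ∘ Equiv.swap i j) i - (Multiplicative.toAdd v ∘ Equiv.swap i j) j = _
    simp [Equiv.swap_apply_left, Equiv.swap_apply_right]

lemma p_mul (g h : Gsd n i j) : pG i j (g * h) = pG i j g + pG i j h := rfl

lemma p_one : pG i j (1 : Gsd n i j) = 0 := rfl

lemma p_inv (g : Gsd n i j) : pG i j g⁻¹ = pG i j g := by
  have : pG i j g⁻¹ = - pG i j g := rfl
  rw [this]
  rcases zmod2cases (pG i j g) with h | h <;> rw [h] <;> decide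

lemma d_mul (g h : Gsd n i j) :
    dG i j (g * h) = dG i j g + (if pG i j g = 0 then 1 else -1) * dG i j h := by
  have hl : (g * h).left = g.left * (phiSwap n i j g.right) h.left :=
    SemidirectProduct.mul_left g h
  unfold dG
  rw [hl]
  have : ∀ (x y : Multiplicative (Fin n → ℤ)) (k : Fin n),
      Multiplicative.toAdd (x * y) k = Multiplicative.toAdd x k + Multiplicative.toAdd y k :=
    fun _ _ _ => rfl
  rw [this, this]
  have := d_phi i j g.right h.left
  unfold pG
  omega

lemma d_one : dG i j (1 : Gsd n i j) = 0 := by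
  unfold dG
  rw [SemidirectProduct.one_left]
  simp

lemma d_inv (g : Gsd n i j) :
    dG i j g⁻¹ = (if pG i j g = 0 then -1 else 1) * dG i j g := by
  have h := d_mul i j g g⁻¹
  rw [mul_inv_cancel, d_one] at h
  rcases zmod2cases (pG i j g) with hp | hp <;> simp [hp] at h ⊢ <;> omega


lemma d_conj (a b : Gsd n i j) (hb : pG i j b = 1) :
    pG i j (a * b * a⁻¹) = 1 ∧
    dG i j (a * b * a⁻¹) = 2 * dG i j a + (if pG i j a = 0 then 1 else -1) * dG i j b := by
  have hp : pG i j (a * b * a⁻¹) = pG i j a + pG i j b + pG i j a := by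
    rw [p_mul, p_mul, p_inv]
  have hd : dG i j (a * b * a⁻¹)
      = dG i j (a * b) + (if pG i j (a * b) = 0 then 1 else -1) * dG i j a⁻¹ :=
    d_mul i j (a * b) a⁻¹
  rw [d_mul i j a b, d_inv, p_mul, hb] at hd
  have h2 : (1 + 1 : ZMod 2) = 0 := by decide
  have h10 : (1 + 0 : ZMod 2) = 1 := by decide
  have h01 : (0 + 1 : ZMod 2) = 1 := by decide
  rcases zmod2cases (pG i j a) with ha | ha <;>
    rw [ha] at hp hd <;> rw [hb] at hp <;>
    constructor <;> simp [ha, h2, h10, h01] at hd ⊢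
  · rw [hp]; decide
  · omega
  · rw [hp]; decide
  · omega

end PWEaux

namespace PWEaux
variable {n : ℕ} (i j : Fin n)

lemma p_inr1 : pG i j (SemidirectProduct.inr (Multiplicative.ofAdd (1 : ZMod 2)) : Gsd n i j) = 1 := by
  show Multiplicative.toAdd (SemidirectProduct.inr (Multiplicative.ofAdd (1 : ZMod 2)) : Gsd n i j).right = 1
  rw [SemidirectProduct.right_inr]
  rfl

lemma p_inl (v : Multiplicative (Fin n → ℤ)) :
    pG i j (SemidirectProduct.inl v : Gsd n i j) = 0 := by
  show Multiplicative.toAdd (SemidirectProduct.inl v : Gsd n i j).right = 0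
  rw [SemidirectProduct.right_inl]
  rfl

lemma d_single (hij : i ≠ j) :
    dG i j (SemidirectProduct.inl (Multiplicative.ofAdd (Pi.single i (1:ℤ))) : Gsd n i j) = 1 := by
  unfold dG
  rw [SemidirectProduct.left_inl]
  rw [toAdd_ofAdd]
  rw [Pi.single_eq_same, Pi.single_eq_of_ne (Ne.symm hij)]
  ring

end PWEaux


/-- For `G = ℤⁿ ⋊ ℤ/2ℤ`, where the nontrivial element of `ℤ/2ℤ` swaps the `i`-th and
`j`-th standard generators of `ℤⁿ` (for `i ≠ j`) and fixes the others, every finite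
symmetric generating set `A` of `G` admits `a, b ∈ A` with `a·b·a⁻¹` geodesic; hence
`Geo(G,A)` is not piecewise excluding. -/
theorem zn_semidirect_swap_not_piecewise_excluding (n : ℕ) (hn : 2 ≤ n)
    (i j : Fin n) (hij : i ≠ j)
    (A : Finset ((Multiplicative (Fin n → ℤ)) ⋊[phiSwap n i j] Multiplicative (ZMod 2)))
    (hA : IsSymmGen A) :
    (∃ a ∈ A, ∃ b ∈ A, IsGeodesic A [a, b, a⁻¹]) ∧
    ¬ PiecewiseExcluding A (Geo A) := by
  classical
  obtain ⟨hgen, hinv⟩ := hA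
  have hmemK : ∀ (K : Subgroup (PWEaux.Gsd n i j)), (A : Set (PWEaux.Gsd n i j)) ⊆ K →
      ∀ g, g ∈ K := by
    intro K hsub g
    have h := (Subgroup.closure_le K).2 hsub
    rw [hgen] at h
    exact h (Subgroup.mem_top g)
  -- reflections exist in A
  have hrefl : ∃ b ∈ A, PWEaux.pG i j b = 1 := by
    by_contra hc
    push_neg at hc
    have hall : ∀ g ∈ A, PWEaux.pG i j g = 0 := by
      intro g hg
      rcases PWEaux.zmod2cases (PWEaux.pG i j g) with h | h
      · exact h
      · exact absurd h (hc g hg)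
    let K : Subgroup (PWEaux.Gsd n i j) :=
      { carrier := {g | PWEaux.pG i j g = 0}
        one_mem' := PWEaux.p_one i j
        mul_mem' := by
          intro a b ha hb
          have ha' : PWEaux.pG i j a = 0 := ha
          have hb' : PWEaux.pG i j b = 0 := hb
          show PWEaux.pG i j (a * b) = 0
          rw [PWEaux.p_mul, ha', hb']
          decide
        inv_mem' := by
          intro a ha
          have ha' : PWEaux.pG i j a = 0 := ha
          show PWEaux.pG i j a⁻¹ = 0
          rw [PWEaux.p_inv]
          exact ha' }
    have hsub : (A : Set (PWEaux.Gsd n i j)) ⊆ K := fun g hg => hall g hg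
    have hmem := hmemK K hsub (SemidirectProduct.inr (Multiplicative.ofAdd (1 : ZMod 2)))
    have hp1 := PWEaux.p_inr1 i j
    have : (1 : ZMod 2) = 0 := by rw [← hp1]; exact hmem
    exact absurd this (by decide)
  obtain ⟨m0, hm0⟩ : ∃ m, m = (A.filter (fun g => PWEaux.pG i j g = 0)).sup
      (fun g => (PWEaux.dG i j g).natAbs) := ⟨_, rfl⟩
  obtain ⟨m1, hm1⟩ : ∃ m, m = (A.filter (fun g => PWEaux.pG i j g = 1)).sup
      (fun g => (PWEaux.dG i j g).natAbs) := ⟨_, rfl⟩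
  have hD0 : ∀ g ∈ A, PWEaux.pG i j g = 0 → (PWEaux.dG i j g).natAbs ≤ m0 := by
    intro g hg hp
    rw [hm0]
    exact Finset.le_sup (f := fun g => (PWEaux.dG i j g).natAbs)
      (Finset.mem_filter.2 ⟨hg, hp⟩)
  have hD1 : ∀ g ∈ A, PWEaux.pG i j g = 1 → (PWEaux.dG i j g).natAbs ≤ m1 := by
    intro g hg hp
    rw [hm1]
    exact Finset.le_sup (f := fun g => (PWEaux.dG i j g).natAbs)
      (Finset.mem_filter.2 ⟨hg, hp⟩)
  have hA1ne : (A.filter (fun g => PWEaux.pG i j g = 1)).Nonempty := by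
    obtain ⟨b, hbA, hb⟩ := hrefl
    exact ⟨b, Finset.mem_filter.2 ⟨hbA, hb⟩⟩
  -- key: a conjugate beating the length-two bound
  obtain ⟨a, haA, b, hbA, hpc, hdc⟩ :
      ∃ a ∈ A, ∃ b ∈ A, PWEaux.pG i j (a * b * a⁻¹) = 1 ∧
        m0 + m1 < (PWEaux.dG i j (a * b * a⁻¹)).natAbs := by
    by_cases hm0z : m0 = 0
    · -- all A-rotations have trivial d; use two reflections
      obtain ⟨a, haA1, hamax⟩ := Finset.exists_mem_eq_sup _ hA1ne
        (fun g => (PWEaux.dG i j g).natAbs)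
      obtain ⟨haA, hpa⟩ := Finset.mem_filter.1 haA1
      have hamax' : (PWEaux.dG i j a).natAbs = m1 := by rw [hm1]; exact hamax.symm
      obtain ⟨b, hbA, hpb, hbne⟩ : ∃ b ∈ A, PWEaux.pG i j b = 1 ∧
          PWEaux.dG i j b ≠ PWEaux.dG i j a := by
        by_contra hc
        push_neg at hc
        let K : Subgroup (PWEaux.Gsd n i j) :=
          { carrier := {g | (PWEaux.pG i j g = 0 ∧ PWEaux.dG i j g = 0) ∨
              (PWEaux.pG i j g = 1 ∧ PWEaux.dG i j g = PWEaux.dG i j a)}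
            one_mem' := Or.inl ⟨PWEaux.p_one i j, PWEaux.d_one i j⟩
            mul_mem' := by
              intro x y hx hy
              have hx' := hx
              have hy' := hy
              have hdm := PWEaux.d_mul i j x y
              have hpm := PWEaux.p_mul i j x y
              rcases hx' with ⟨hp1', hd1⟩ | ⟨hp1', hd1⟩ <;>
                rcases hy' with ⟨hp2', hd2⟩ | ⟨hp2', hd2⟩
              · exact Or.inl ⟨by rw [hpm, hp1', hp2']; decide,
                  by rw [hdm, hp1', hd1, hd2]; simp⟩
              · exact Or.inr ⟨by rw [hpm, hp1', hp2']; decide,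
                  by rw [hdm, hp1', hd1, hd2]; simp⟩
              · exact Or.inr ⟨by rw [hpm, hp1', hp2']; decide,
                  by rw [hdm, hp1', hd1, hd2]; simp⟩
              · refine Or.inl ⟨by rw [hpm, hp1', hp2']; decide, ?_⟩
                rw [hdm, hp1', hd1, hd2]
                simp [(by decide : (1 : ZMod 2) ≠ 0)]
            inv_mem' := by
              intro x hx
              have hdi := PWEaux.d_inv i j x
              have hpi := PWEaux.p_inv i j x
              rcases hx with ⟨hp', hd'⟩ | ⟨hp', hd'⟩
              · exact Or.inl ⟨by rw [hpi]; exact hp', by rw [hdi, hp', hd']; simp⟩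
              · refine Or.inr ⟨by rw [hpi]; exact hp', ?_⟩
                rw [hdi, hp', hd']
                simp [(by decide : (1 : ZMod 2) ≠ 0)] }
        have hsub : (A : Set (PWEaux.Gsd n i j)) ⊆ K := by
          intro g hg
          rcases PWEaux.zmod2cases (PWEaux.pG i j g) with h | h
          · left
            refine ⟨h, ?_⟩
            have h1 := hD0 g hg h
            rw [hm0z] at h1
            omega
          · exact Or.inr ⟨h, hc g hg h⟩
        have hmem := hmemK K hsub
          (SemidirectProduct.inl (Multiplicative.ofAdd (Pi.single i (1:ℤ))))
        have hp0 := PWEaux.p_inl i j (Multiplicative.ofAdd (Pi.single i (1:ℤ)))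
        have hd1' := PWEaux.d_single i j hij
        rcases hmem with ⟨_, hd0⟩ | ⟨hp1', _⟩
        · rw [hd1'] at hd0; exact absurd hd0 (by decide)
        · rw [hp0] at hp1'; exact absurd hp1' (by decide)
      refine ⟨a, haA, b, hbA, ?_⟩
      obtain ⟨hp, hd⟩ := PWEaux.d_conj i j a b hpb
      rw [if_neg (by rw [hpa]; decide)] at hd
      refine ⟨hp, ?_⟩
      rw [hd]
      have h2 : (PWEaux.dG i j b).natAbs ≤ m1 := hD1 b hbA hpb
      omega
    · -- a rotation with maximal |d|, conjugating a maximal reflection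
      have hA0ne : (A.filter (fun g => PWEaux.pG i j g = 0)).Nonempty := by
        rcases Finset.eq_empty_or_nonempty (A.filter (fun g => PWEaux.pG i j g = 0))
          with h | h
        · exfalso; apply hm0z; rw [hm0, h]; simp
        · exact h
      obtain ⟨a, haA0, hamax⟩ := Finset.exists_mem_eq_sup _ hA0ne
        (fun g => (PWEaux.dG i j g).natAbs)
      obtain ⟨haA, hpa⟩ := Finset.mem_filter.1 haA0
      have hamax' : (PWEaux.dG i j a).natAbs = m0 := by rw [hm0]; exact hamax.symm
      obtain ⟨b, hbA1, hbmax⟩ := Finset.exists_mem_eq_sup _ hA1ne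
        (fun g => (PWEaux.dG i j g).natAbs)
      obtain ⟨hbA, hpb⟩ := Finset.mem_filter.1 hbA1
      have hbmax' : (PWEaux.dG i j b).natAbs = m1 := by rw [hm1]; exact hbmax.symm
      have hainv : a⁻¹ ∈ A := hinv a haA
      have hpainv : PWEaux.pG i j a⁻¹ = 0 := by rw [PWEaux.p_inv]; exact hpa
      have hdainv : PWEaux.dG i j a⁻¹ = - PWEaux.dG i j a := by
        rw [PWEaux.d_inv, hpa]; simp
      obtain ⟨a', ha'A, hpa', hda'abs, hs1, hs2⟩ :
          ∃ a' ∈ A, PWEaux.pG i j a' = 0 ∧ (PWEaux.dG i j a').natAbs = m0 ∧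
            (0 ≤ PWEaux.dG i j b → 0 ≤ PWEaux.dG i j a') ∧
             (PWEaux.dG i j b < 0 → PWEaux.dG i j a' ≤ 0) := by
        by_cases hsb : 0 ≤ PWEaux.dG i j b
        · by_cases hsa : 0 ≤ PWEaux.dG i j a
          · exact ⟨a, haA, hpa, hamax', fun _ => hsa, fun h => absurd h (not_lt.2 hsb)⟩
          · refine ⟨a⁻¹, hainv, hpainv, by rw [hdainv, Int.natAbs_neg]; exact hamax', ?_, ?_⟩
            · intro _; rw [hdainv]; omega
            · intro h; exact absurd h (not_lt.2 hsb)
        · by_cases hsa : 0 ≤ PWEaux.dG i j a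
          · refine ⟨a⁻¹, hainv, hpainv, by rw [hdainv, Int.natAbs_neg]; exact hamax', ?_, ?_⟩
            · intro h; exact absurd h hsb
            · intro _; rw [hdainv]; omega
          · exact ⟨a, haA, hpa, hamax', fun h => absurd h hsb,
              fun _ => le_of_lt (not_le.1 hsa)⟩
      refine ⟨a', ha'A, b, hbA, ?_⟩
      obtain ⟨hp, hd⟩ := PWEaux.d_conj i j a' b hpb
      rw [if_pos hpa'] at hd
      refine ⟨hp, ?_⟩
      rw [hd]
      have hm0pos : 0 < m0 := Nat.pos_of_ne_zero hm0z
      omega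
  -- the three-letter geodesic
  have hword : IsWordOver A [a, b, a⁻¹] := by
    intro x hx
    rcases List.mem_cons.1 hx with h | hx
    · rw [h]; exact haA
    rcases List.mem_cons.1 hx with h | hx
    · rw [h]; exact hbA
    rcases List.mem_cons.1 hx with h | hx
    · rw [h]; exact hinv a haA
    · exact absurd hx (List.not_mem_nil)
  have hprodw : ([a, b, a⁻¹] : List (PWEaux.Gsd n i j)).prod = a * b * a⁻¹ := by
    simp [mul_assoc]
  have hgeo : IsGeodesic A [a, b, a⁻¹] := by
    refine ⟨hword, ?_⟩
    intro v hv hpv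
    by_contra hlen
    push_neg at hlen
    rcases v with _ | ⟨x, v⟩
    · rw [List.prod_nil, hprodw] at hpv
      have h := hpc
      rw [← hpv, PWEaux.p_one] at h
      exact absurd h (by decide)
    rcases v with _ | ⟨y, v⟩
    · rw [hprodw] at hpv
      have hx : x = a * b * a⁻¹ := by rw [← hpv]; simp
      have hxA : x ∈ A := hv x (by simp)
      have hpx : PWEaux.pG i j x = 1 := by rw [hx]; exact hpc
      have hb1 := hD1 x hxA hpx
      rw [hx] at hb1
      omega
    rcases v with _ | ⟨z, v⟩
    · rw [hprodw] at hpv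
      have hxy : x * y = a * b * a⁻¹ := by rw [← hpv]; simp [mul_assoc]
      have hxA : x ∈ A := hv x (by simp)
      have hyA : y ∈ A := hv y (by simp)
      have hpxy : PWEaux.pG i j x + PWEaux.pG i j y = 1 := by
        rw [← PWEaux.p_mul, hxy]; exact hpc
      have hdm := PWEaux.d_mul i j x y
      have hdabs : m0 + m1 < (PWEaux.dG i j (x * y)).natAbs := by rw [hxy]; exact hdc
      rcases PWEaux.zmod2cases (PWEaux.pG i j x) with hx0 | hx0 <;>
        rcases PWEaux.zmod2cases (PWEaux.pG i j y) with hy0 | hy0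
      · rw [hx0, hy0] at hpxy; exact absurd hpxy (by decide)
      · have b1 := hD0 x hxA hx0
        have b2 := hD1 y hyA hy0
        rw [hdm, hx0] at hdabs
        rw [if_pos rfl] at hdabs
        omega
      · have b1 := hD1 x hxA hx0
        have b2 := hD0 y hyA hy0
        rw [hdm, hx0] at hdabs
        rw [if_neg (by decide : ¬(1 : ZMod 2) = 0)] at hdabs
        omega
      · rw [hx0, hy0] at hpxy; exact absurd hpxy (by decide)
    · simp only [List.length_cons, List.length_nil] at hlen
      omega
  refine ⟨⟨a, haA, b, hbA, hgeo⟩, ?_⟩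
  rintro ⟨F, hF, hiff⟩
  have hwordu : IsWordOver A [a, a⁻¹] := by
    intro x hx
    rcases List.mem_cons.1 hx with h | hx
    · rw [h]; exact haA
    rcases List.mem_cons.1 hx with h | hx
    · rw [h]; exact hinv a haA
    · exact absurd hx (List.not_mem_nil)
  have hsubl : List.Sublist [a, a⁻¹] [a, b, a⁻¹] :=
    List.Sublist.cons₂ a (List.Sublist.cons b (List.Sublist.cons₂ a⁻¹ List.Sublist.slnil))
  have h1 := (hiff [a, b, a⁻¹] hword).1 hgeo
  have h2 : ∀ u ∈ F, ¬ List.Sublist u [a, a⁻¹] := fun u hu h => h1 u hu (h.trans hsubl)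
  have hu_geo : [a, a⁻¹] ∈ Geo A := (hiff [a, a⁻¹] hwordu).2 h2
  obtain ⟨_, hmin⟩ := hu_geo
  have := hmin [] (fun x hx => absurd hx (List.not_mem_nil)) (by simp)
  simp at this
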